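/- If the input sequence {u_k}_{k=0}^{N−1} is persistently exciting of order n+1, then for every system (A,B,C,D) that is output reachable (i.e., Γ has full row rank p) and every initial state x_0 ∈ ℝ^n, the output sequence {y_k}_{k=0}^{N−1} generated by the system from x_0 under input u is persistently exciting of order 1. -/

import Mathlib

open Matrix Finset

noncomputable def stateSeq {n m : ℕ} (A : Matrix (Fin n) (Fin n) ℝ) (B : Matrix (Fin n) (Fin m) ℝ)
    (x0 : Fin n → ℝ) (u : ℕ → Fin m → ℝ) : ℕ → Fin n → ℝ
  | 0 => x0
  | k + 1 => A.mulVec (stateSeq A B x0 u k) + B.mulVec (u k)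

/-- Output sequence `y_k = C x_k + D u_k` of the LTI system started at `x0` with input `u`. -/
noncomputable def outputSeq {n m p : ℕ} (A : Matrix (Fin n) (Fin n) ℝ) (B : Matrix (Fin n) (Fin m) ℝ)
    (C : Matrix (Fin p) (Fin n) ℝ) (D : Matrix (Fin p) (Fin m) ℝ)
    (x0 : Fin n → ℝ) (u : ℕ → Fin m → ℝ) (k : ℕ) : Fin p → ℝ :=
  C.mulVec (stateSeq A B x0 u k) + D.mulVec (u k)

/-- Markov parameters: `Γ_0 = D`, `Γ_j = C A^(j-1) B` for `j ≥ 1`. -/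
noncomputable def Markov {n m p : ℕ} (A : Matrix (Fin n) (Fin n) ℝ) (B : Matrix (Fin n) (Fin m) ℝ)
    (C : Matrix (Fin p) (Fin n) ℝ) (D : Matrix (Fin p) (Fin m) ℝ) : ℕ → Matrix (Fin p) (Fin m) ℝ
  | 0 => D
  | j + 1 => C * A ^ j * B

/-- The matrix `M = [M_n ⋯ M_1 M_0]` with `M_j = ∑_{q=0}^j d_{j-q} Γ_q`; the block at
block-column `i` (from the left, `i = 0,…,n`) is `M_{n-i}`. -/
noncomputable def Mmat {n m p : ℕ} (A : Matrix (Fin n) (Fin n) ℝ) (B : Matrix (Fin n) (Fin m) ℝ)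
    (C : Matrix (Fin p) (Fin n) ℝ) (D : Matrix (Fin p) (Fin m) ℝ) (d : ℕ → ℝ) :
    Matrix (Fin p) (Fin (n + 1) × Fin m) ℝ :=
  Matrix.of fun i jl =>
    (∑ q ∈ Finset.range ((n - (jl.1 : ℕ)) + 1),
      d ((n - (jl.1 : ℕ)) - q) • Markov A B C D q) i jl.2

/-- The matrix `Γ = [Γ_0 Γ_1 ⋯ Γ_n]`. -/
noncomputable def Gammamat {n m p : ℕ} (A : Matrix (Fin n) (Fin n) ℝ) (B : Matrix (Fin n) (Fin m) ℝ)
    (C : Matrix (Fin p) (Fin n) ℝ) (D : Matrix (Fin p) (Fin m) ℝ) :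
    Matrix (Fin p) (Fin (n + 1) × Fin m) ℝ :=
  Matrix.of fun i jl => Markov A B C D (jl.1 : ℕ) i jl.2

lemma rank_eq_card_iff_rows_li {r c : Type*} [Fintype r] [Fintype c]
    (M : Matrix r c ℝ) : M.rank = Fintype.card r ↔ LinearIndependent ℝ M := by
  rw [Matrix.rank_eq_finrank_span_row]
  exact eq_comm.trans (linearIndependent_iff_card_eq_finrank_span (b := M.row)).symm

lemma sum_mulVec' {a b : ℕ} {I : Type*} (s : Finset I) (f : I → Matrix (Fin a) (Fin b) ℝ)
    (v : Fin b → ℝ) : (∑ i ∈ s, f i).mulVec v = ∑ i ∈ s, (f i).mulVec v := by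
  induction s using Finset.cons_induction with
  | empty => simp
  | cons x s hx ih => simp [Finset.sum_cons, Matrix.add_mulVec, ih]

lemma mulVec_sum' {a b : ℕ} {I : Type*} (s : Finset I) (M : Matrix (Fin a) (Fin b) ℝ)
    (f : I → Fin b → ℝ) : M.mulVec (∑ i ∈ s, f i) = ∑ i ∈ s, M.mulVec (f i) := by
  induction s using Finset.cons_induction with
  | empty => simp
  | cons x s hx ih => simp [Finset.sum_cons, Matrix.mulVec_add, ih]

lemma stateSeq_add {n m : ℕ} (A : Matrix (Fin n) (Fin n) ℝ) (B : Matrix (Fin n) (Fin m) ℝ)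
    (x0 : Fin n → ℝ) (u : ℕ → Fin m → ℝ) (k : ℕ) :
    ∀ j, stateSeq A B x0 u (k + j) = (A ^ j).mulVec (stateSeq A B x0 u k)
      + ∑ i ∈ Finset.range j, ((A ^ (j - 1 - i)) * B).mulVec (u (k + i))
  | 0 => by simp [Matrix.one_mulVec]
  | j + 1 => by
    have IH := stateSeq_add A B x0 u k j
    have hk : k + (j + 1) = (k + j) + 1 := by ring
    rw [hk]
    show A.mulVec (stateSeq A B x0 u (k + j)) + B.mulVec (u (k + j)) = _
    rw [IH, Matrix.mulVec_add, mulVec_sum', Matrix.mulVec_mulVec, ← pow_succ']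
    rw [Finset.sum_range_succ]
    have h1 : (A ^ (j + 1 - 1 - j)) * B = B := by
      norm_num
    have h2 : ∀ i ∈ Finset.range j,
        A.mulVec (((A ^ (j - 1 - i)) * B).mulVec (u (k + i)))
          = ((A ^ (j + 1 - 1 - i)) * B).mulVec (u (k + i)) := by
      intro i hi
      rw [Finset.mem_range] at hi
      have he : j + 1 - 1 - i = (j - 1 - i) + 1 := by omega
      rw [Matrix.mulVec_mulVec, he, pow_succ', Matrix.mul_assoc]
    rw [Finset.sum_congr rfl h2, h1]
    abel

lemma output_formula {n m p : ℕ} (A : Matrix (Fin n) (Fin n) ℝ) (B : Matrix (Fin n) (Fin m) ℝ)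
    (C : Matrix (Fin p) (Fin n) ℝ) (D : Matrix (Fin p) (Fin m) ℝ)
    (x0 : Fin n → ℝ) (u : ℕ → Fin m → ℝ) (k j : ℕ) :
    outputSeq A B C D x0 u (k + j) = C.mulVec ((A ^ j).mulVec (stateSeq A B x0 u k))
      + ∑ i ∈ Finset.range (j + 1), (Markov A B C D (j - i)).mulVec (u (k + i)) := by
  rw [outputSeq, stateSeq_add, Matrix.mulVec_add, mulVec_sum', Finset.sum_range_succ]
  have h1 : Markov A B C D (j - j) = D := by simp [Markov]
  have h2 : ∀ i ∈ Finset.range j,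
      C.mulVec (((A ^ (j - 1 - i)) * B).mulVec (u (k + i)))
        = (Markov A B C D (j - i)).mulVec (u (k + i)) := by
    intro i hi
    rw [Finset.mem_range] at hi
    have he : j - i = (j - 1 - i) + 1 := by omega
    rw [he, Matrix.mulVec_mulVec]
    show _ = (C * A ^ (j - 1 - i) * B).mulVec (u (k + i))
    rw [Matrix.mul_assoc]
  rw [Finset.sum_congr rfl h2, h1]
  abel

lemma tri_swap {M : Type*} [AddCommMonoid M] (b : ℕ) (f : ℕ → ℕ → M) :
    ∑ j ∈ Finset.range b, ∑ i ∈ Finset.range (j + 1), f i j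
      = ∑ i ∈ Finset.range b, ∑ j ∈ Finset.Ico i b, f i j := by
  simp only [Finset.range_eq_Ico]
  exact (Finset.sum_Ico_Ico_comm 0 b f).symm

lemma key_identity {n m p : ℕ} (A : Matrix (Fin n) (Fin n) ℝ) (B : Matrix (Fin n) (Fin m) ℝ)
    (C : Matrix (Fin p) (Fin n) ℝ) (D : Matrix (Fin p) (Fin m) ℝ)
    (x0 : Fin n → ℝ) (u : ℕ → Fin m → ℝ) (k : ℕ) (d : ℕ → ℝ)
    (hCH : ∑ j ∈ Finset.range (n + 1), d j • A ^ j = 0) :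
    ∑ j ∈ Finset.range (n + 1), d j • outputSeq A B C D x0 u (k + j)
      = ∑ i ∈ Finset.range (n + 1),
          (∑ q ∈ Finset.range (n + 1 - i), d (q + i) • Markov A B C D q).mulVec (u (k + i)) := by
  have expand : ∀ j, d j • outputSeq A B C D x0 u (k + j)
      = C.mulVec ((d j • A ^ j).mulVec (stateSeq A B x0 u k))
        + ∑ i ∈ Finset.range (j + 1), d j • (Markov A B C D (j - i)).mulVec (u (k + i)) := by
    intro j
    rw [output_formula, smul_add, Finset.smul_sum, Matrix.smul_mulVec,
      ← Matrix.mulVec_smul]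
  simp_rw [expand]
  rw [Finset.sum_add_distrib, ← mulVec_sum', ← sum_mulVec', hCH]
  rw [Matrix.zero_mulVec, Matrix.mulVec_zero, zero_add]
  rw [tri_swap]
  apply Finset.sum_congr rfl
  intro i hi
  rw [Finset.mem_range] at hi
  rw [Finset.sum_Ico_eq_sum_range, sum_mulVec']
  apply Finset.sum_congr rfl
  intro q hq
  have h1 : i + q - i = q := by omega
  have h2 : i + q = q + i := by omega
  rw [h1, h2, Matrix.smul_mulVec]

lemma dotProduct_sum' {a : ℕ} {I : Type*} (s : Finset I) (v : Fin a → ℝ) (f : I → Fin a → ℝ) :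
    v ⬝ᵥ (∑ i ∈ s, f i) = ∑ i ∈ s, v ⬝ᵥ f i := by
  induction s using Finset.cons_induction with
  | empty => simp
  | cons x s hx ih => simp [Finset.sum_cons, dotProduct_add, ih]

lemma vecMul_matrix_sum {a b : ℕ} {I : Type*} (s : Finset I) (v : Fin a → ℝ)
    (f : I → Matrix (Fin a) (Fin b) ℝ) (l : Fin b) :
    Matrix.vecMul v (∑ i ∈ s, f i) l = ∑ i ∈ s, Matrix.vecMul v (f i) l := by
  induction s using Finset.cons_induction with
  | empty => simp
  | cons x s hx ih => simp [Finset.sum_cons, Matrix.vecMul_add, ih]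

lemma vecMul_matrix_smul {a b : ℕ} (v : Fin a → ℝ) (r : ℝ)
    (M : Matrix (Fin a) (Fin b) ℝ) (l : Fin b) :
    Matrix.vecMul v (r • M) l = r * Matrix.vecMul v M l := by
  simp [Matrix.vecMul, dotProduct, Finset.mul_sum]
  apply Finset.sum_congr rfl
  intros; ring

/-- if `u` is PE of order `n+1`, then for every output reachable system
(`Γ` has full row rank `p`) and every initial state, the output is PE of order 1. -/
theorem stmt_5 {n m p : ℕ} (hn : 0 < n) (hm : 0 < m) (hp : 0 < p)
    (N : ℕ) (hN : n < N) (u : ℕ → Fin m → ℝ)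
    (hPE : (Matrix.of fun (il : Fin (n + 1) × Fin m) (k : Fin (N - (n + 1) + 1)) =>
        u ((k : ℕ) + (il.1 : ℕ)) il.2).rank = m * (n + 1)) :
    ∀ (A : Matrix (Fin n) (Fin n) ℝ) (B : Matrix (Fin n) (Fin m) ℝ)
      (C : Matrix (Fin p) (Fin n) ℝ) (D : Matrix (Fin p) (Fin m) ℝ),
      (Gammamat A B C D).rank = p →
      ∀ x0 : Fin n → ℝ,
        (Matrix.of fun (i : Fin p) (k : Fin N) => outputSeq A B C D x0 u (k : ℕ) i).rank = p := by
  intro A B C D hΓ x0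
  classical
  set d : ℕ → ℝ := fun j => A.charpoly.coeff j with hd
  have hCH : ∑ j ∈ Finset.range (n + 1), d j • A ^ j = 0 := by
    have h := Matrix.aeval_self_charpoly A
    rwa [Polynomial.aeval_eq_sum_range, Matrix.charpoly_natDegree_eq_dim, Fintype.card_fin] at h
  have hdn : d n = 1 := by
    have h := (Matrix.charpoly_monic A).coeff_natDegree
    rwa [Matrix.charpoly_natDegree_eq_dim, Fintype.card_fin] at h
  suffices hli : LinearIndependent ℝ
      (Matrix.of fun (i : Fin p) (k : Fin N) => outputSeq A B C D x0 u (k : ℕ) i) by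
    have h := (rank_eq_card_iff_rows_li _).mpr hli
    rwa [Fintype.card_fin] at h
  refine Fintype.linearIndependent_iff.mpr ?_
  intro v hv
  have hy : ∀ t, t < N → v ⬝ᵥ outputSeq A B C D x0 u t = 0 := by
    intro t ht
    have h := congrFun hv ⟨t, ht⟩
    simpa [Finset.sum_apply, dotProduct] using h
  have hU : LinearIndependent ℝ
      (Matrix.of fun (il : Fin (n + 1) × Fin m) (k : Fin (N - (n + 1) + 1)) =>
        u ((k : ℕ) + (il.1 : ℕ)) il.2) := by
    rw [← rank_eq_card_iff_rows_li, hPE, Fintype.card_prod, Fintype.card_fin, Fintype.card_fin,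
      mul_comm]
  set c : Fin (n + 1) × Fin m → ℝ := fun il =>
    Matrix.vecMul v (∑ q ∈ Finset.range (n + 1 - (il.1 : ℕ)),
      d (q + (il.1 : ℕ)) • Markov A B C D q) il.2 with hcdef
  have hc : ∀ il, c il = 0 := by
    refine Fintype.linearIndependent_iff.mp hU c ?_
    funext k
    have hk : (k : ℕ) < N - n := by
      have := k.isLt; omega
    rw [Finset.sum_apply, Pi.zero_apply]
    calc ∑ il : Fin (n + 1) × Fin m, (c il • (Matrix.of fun (il : Fin (n + 1) × Fin m)
            (k : Fin (N - (n + 1) + 1)) => u ((k : ℕ) + (il.1 : ℕ)) il.2) il) k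
        = ∑ i : Fin (n + 1), ∑ l : Fin m,
            c (i, l) * u ((k : ℕ) + (i : ℕ)) l := by
          rw [Fintype.sum_prod_type]
          simp only [Pi.smul_apply, smul_eq_mul, Matrix.of_apply]
      _ = ∑ i : Fin (n + 1),
            v ⬝ᵥ (∑ q ∈ Finset.range (n + 1 - (i : ℕ)),
              d (q + (i : ℕ)) • Markov A B C D q).mulVec (u ((k : ℕ) + (i : ℕ))) := by
          apply Finset.sum_congr rfl
          intro i _
          rw [Matrix.dotProduct_mulVec]
          rfl
      _ = v ⬝ᵥ ∑ i ∈ Finset.range (n + 1),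
            (∑ q ∈ Finset.range (n + 1 - i), d (q + i) • Markov A B C D q).mulVec
              (u ((k : ℕ) + i)) := by
          rw [dotProduct_sum']
          exact Fin.sum_univ_eq_sum_range (fun i => v ⬝ᵥ (∑ q ∈ Finset.range (n + 1 - i),
            d (q + i) • Markov A B C D q).mulVec (u ((k : ℕ) + i))) (n + 1)
      _ = v ⬝ᵥ ∑ j ∈ Finset.range (n + 1), d j • outputSeq A B C D x0 u ((k : ℕ) + j) := by
          rw [key_identity A B C D x0 u (k : ℕ) d hCH]
      _ = ∑ j ∈ Finset.range (n + 1), d j * (v ⬝ᵥ outputSeq A B C D x0 u ((k : ℕ) + j)) := by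
          rw [dotProduct_sum']
          apply Finset.sum_congr rfl
          intro j _
          rw [dotProduct_smul, smul_eq_mul]
      _ = 0 := by
          apply Finset.sum_eq_zero
          intro j hj
          rw [Finset.mem_range] at hj
          rw [hy ((k : ℕ) + j) (by omega), mul_zero]
  have hw : ∀ r, r ≤ n → ∀ l, Matrix.vecMul v (Markov A B C D r) l = 0 := by
    intro r
    induction r using Nat.strong_induction_on with
    | _ r IH =>
      intro hr l
      have h := hc (⟨n - r, by omega⟩, l)
      rw [hcdef] at h
      simp only [Fin.val_mk] at h
      have hidx : n + 1 - (n - r) = r + 1 := by omega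
      rw [hidx, vecMul_matrix_sum, Finset.sum_range_succ] at h
      rw [Finset.sum_eq_zero, zero_add, vecMul_matrix_smul] at h
      · have hrn : r + (n - r) = n := by omega
        rw [hrn, hdn, one_mul] at h
        exact h
      · intro q hq
        rw [Finset.mem_range] at hq
        rw [vecMul_matrix_smul, IH q (by omega) (by omega), mul_zero]
  have hΓli : LinearIndependent ℝ (Gammamat A B C D) := by
    rw [← rank_eq_card_iff_rows_li, hΓ, Fintype.card_fin]
  refine Fintype.linearIndependent_iff.mp hΓli v ?_
  funext jl
  rw [Finset.sum_apply, Pi.zero_apply]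
  have h := hw (jl.1 : ℕ) (by omega) jl.2
  rw [Matrix.vecMul, dotProduct] at h
  simpa [Gammamat] using h
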